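/- Let σ_1, …, σ_n be i.i.d. uniform spins in {+,-}, let σ̂ be any labelling of the n vertices with |{u : σ̂_u = +}| = n/2, let f(n) = (1/n)Σ_{u=1}^n 1{σ_u = σ̂_u}, and let E be the event that n_+ := |{u : σ_u = +}| lies in (n/2 - n^{3/4}, n/2 + n^{3/4}). Fix δ > 0. Then for u, v chosen uniformly at random (distinct), and uniformly over ε ≥ δ/2: P(σ_u = σ_v = + | σ̂_u = σ̂_v = +, f(n) = 1/2 + ε, E) → (1/2 + ε)², P(σ_u = σ_v = - | σ̂_u = σ̂_v = +, f(n) = 1/2 + ε, E) → (1/2 - ε)², and hence P(σ_u = σ_v | σ̂_u = σ̂_v = +, f(n) = 1/2 + ε, E) → 1/2 + 2ε² as n → ∞; in particular there exists N = N(δ) such that for all n ≥ N and all ε ≥ δ/2, P(σ_u = σ_v | σ̂_u = σ̂_v = +, f(n) = 1/2 + ε, E) ≥ 1/2 + ε². -/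

import Mathlib

noncomputable section

/-- The conditional probability of `T` given `S` under the uniform distribution on a finite
type, computed by counting. -/
def uniformCondProb {α : Type*} (T S : Set α) : ℝ :=
  ((T ∩ S).ncard : ℝ) / (S.ncard : ℝ)

/-- The conditioning event: `u ≠ v`, `σh_u = σh_v = +`, the overlap equals `1/2 + ε`, and the
event `E` that `n₊ = |{w : σ_w = +}|` lies in `(n/2 - n^{3/4}, n/2 + n^{3/4})`.  Here a point
of the sample space is a triple `(σ, u, v)` consisting of the spin configuration and the two
chosen vertices. -/
def condEvent (n : ℕ) (σh : Fin n → Bool) (ε : ℝ) :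
    Set ((Fin n → Bool) × Fin n × Fin n) :=
  {p | p.2.1 ≠ p.2.2 ∧ σh p.2.1 = true ∧ σh p.2.2 = true ∧
    ({w | p.1 w = σh w}.ncard : ℝ) = ((1 : ℝ) / 2 + ε) * n ∧
    |({w | p.1 w = true}.ncard : ℝ) - (n : ℝ) / 2| < (n : ℝ) ^ ((3 : ℝ) / 4)}

open Finset
open scoped Classical

/-! ### Auxiliary lemmas -/

lemma card_filter_product {α β : Type*} (G : Finset α) (B : Finset β) (P : α × β → Prop)
    [DecidablePred P] :
    ((G ×ˢ B).filter P).card = ∑ a ∈ G, (B.filter fun b => P (a, b)).card := by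
  rw [Finset.card_filter, Finset.sum_product]
  exact Finset.sum_congr rfl fun a _ => (Finset.card_filter _ _).symm

lemma cast_offdiag (k : ℕ) : ((k * k - k : ℕ) : ℝ) = (k : ℝ) * ((k : ℝ) - 1) := by
  cases k with
  | zero => simp
  | succ i =>
    rw [Nat.cast_sub (Nat.le_mul_of_pos_left _ i.succ_pos)]
    push_cast; ring

lemma avg_bound {α : Type*} {G : Finset α} (hG : G.Nonempty) {D : ℝ} (hD : 0 < D)
    (f : α → ℝ) (t err : ℝ) (h : ∀ σ ∈ G, |f σ / D - t| ≤ err) :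
    |(∑ σ ∈ G, f σ) / ((G.card : ℝ) * D) - t| ≤ err := by
  have hcard : (0 : ℝ) < G.card := by exact_mod_cast Finset.card_pos.mpr hG
  have key : (∑ σ ∈ G, f σ) / ((G.card : ℝ) * D) - t
      = (∑ σ ∈ G, (f σ / D - t)) / G.card := by
    rw [Finset.sum_sub_distrib, ← Finset.sum_div]
    field_simp
    rw [Finset.sum_const, nsmul_eq_mul]; ring
  rw [key, abs_div, abs_of_pos hcard, div_le_iff₀ hcard]
  calc |∑ σ ∈ G, (f σ / D - t)| ≤ ∑ σ ∈ G, |f σ / D - t| := Finset.abs_sum_le_sum_abs _ _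
    _ ≤ ∑ _σ ∈ G, err := Finset.sum_le_sum h
    _ = err * G.card := by rw [Finset.sum_const, nsmul_eq_mul]; ring

lemma ratio_bound {j m : ℕ} (hm : 2 ≤ m) (hj : j ≤ m) {s c : ℝ}
    (hs0 : 0 ≤ s) (hs1 : s ≤ 1) (hc : |(j : ℝ) - s * m| ≤ c) :
    |((j : ℝ) * ((j : ℝ) - 1)) / ((m : ℝ) * ((m : ℝ) - 1)) - s ^ 2| ≤ (4 * c + 2) / m := by
  have hm2 : (2 : ℝ) ≤ m := by exact_mod_cast hm
  have hjm : (j : ℝ) ≤ m := by exact_mod_cast hj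
  have hj0 : (0 : ℝ) ≤ j := Nat.cast_nonneg j
  have hs2 : s ^ 2 ≤ 1 := by nlinarith
  have hD : (0 : ℝ) < (m : ℝ) * ((m : ℝ) - 1) := by nlinarith
  have hc0 : 0 ≤ c := le_trans (abs_nonneg _) hc
  have h1 : |(j : ℝ) * ((j : ℝ) - 1) - s ^ 2 * ((m : ℝ) * ((m : ℝ) - 1))|
      ≤ 2 * c * m + m := by
    have e1 : |(j:ℝ)^2 - s^2*(m:ℝ)^2| ≤ c * (2*m) := by
      have e : (j:ℝ)^2 - s^2*(m:ℝ)^2 = ((j:ℝ) - s*m) * ((j:ℝ) + s*m) := by ring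
      rw [e, abs_mul]
      have h2 : |(j:ℝ) + s*m| ≤ 2*m := by
        rw [abs_of_nonneg (by nlinarith)]; nlinarith
      exact mul_le_mul hc h2 (abs_nonneg _) hc0
    have e2 : |(j:ℝ) - s^2*m| ≤ m := by
      rw [abs_le]
      have hint2 : (0:ℝ) ≤ (1 - s^2) * m := mul_nonneg (by linarith) (by linarith)
      constructor <;> nlinarith [hint2]
    calc |(j : ℝ) * ((j : ℝ) - 1) - s ^ 2 * ((m : ℝ) * ((m : ℝ) - 1))|
        = |((j:ℝ)^2 - s^2*(m:ℝ)^2) - ((j:ℝ) - s^2*m)| := by ring_nf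
      _ ≤ |(j:ℝ)^2 - s^2*(m:ℝ)^2| + |(j:ℝ) - s^2*m| := abs_sub _ _
      _ ≤ c * (2*m) + m := add_le_add e1 e2
      _ = 2 * c * m + m := by ring
  have key : (j : ℝ) * ((j : ℝ) - 1) / ((m : ℝ) * ((m : ℝ) - 1)) - s ^ 2
      = ((j : ℝ) * ((j : ℝ) - 1) - s ^ 2 * ((m : ℝ) * ((m : ℝ) - 1)))
        / ((m : ℝ) * ((m : ℝ) - 1)) := by
    rw [sub_div, mul_div_cancel_right₀ _ hD.ne']
  rw [key, abs_div, abs_of_pos hD, div_le_div_iff₀ hD (by linarith : (0:ℝ) < (m:ℝ))]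
  have hint : (0:ℝ) ≤ (2*c+1) * ((m:ℝ)-2) * m :=
    mul_nonneg (mul_nonneg (by linarith) (by linarith)) (by linarith)
  calc |(j : ℝ) * ((j : ℝ) - 1) - s ^ 2 * ((m : ℝ) * ((m : ℝ) - 1))| * m
      ≤ (2 * c * m + m) * m := mul_le_mul_of_nonneg_right h1 (by linarith)
    _ ≤ (4 * c + 2) * ((m : ℝ) * ((m : ℝ) - 1)) := by nlinarith [hint]

/-! ### Counting lemmas -/

def Af {n : ℕ} (σh : Fin n → Bool) : Finset (Fin n) := univ.filter fun u => σh u = true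

def Gf (n : ℕ) (σh : Fin n → Bool) (ε : ℝ) : Finset (Fin n → Bool) :=
  univ.filter fun σ => ({w | σ w = σh w}.ncard : ℝ) = ((1 : ℝ) / 2 + ε) * n ∧
    |({w | σ w = true}.ncard : ℝ) - (n : ℝ) / 2| < (n : ℝ) ^ ((3 : ℝ) / 4)

lemma condEvent_eq (n : ℕ) (σh : Fin n → Bool) (ε : ℝ) :
    condEvent n σh ε = ↑(Gf n σh ε ×ˢ (Af σh).offDiag) := by
  ext ⟨σ, u, v⟩
  simp only [condEvent, Gf, Af, Set.mem_setOf_eq, Finset.mem_coe, Finset.mem_product,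
    Finset.mem_offDiag, Finset.mem_filter, Finset.mem_univ, true_and]
  tauto

lemma offDiag_filter_pair {n : ℕ} (A : Finset (Fin n)) (σ : Fin n → Bool) (b : Bool) :
    A.offDiag.filter (fun q => σ q.1 = b ∧ σ q.2 = b)
      = (A.filter fun u => σ u = b).offDiag := by
  ext ⟨u, v⟩
  simp only [Finset.mem_filter, Finset.mem_offDiag]
  tauto

lemma offDiag_filter_eq {n : ℕ} (A : Finset (Fin n)) (σ : Fin n → Bool) :
    (A.offDiag.filter fun q => σ q.1 = σ q.2).card
      = (A.filter fun u => σ u = true).offDiag.card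
        + (A.filter fun u => σ u = false).offDiag.card := by
  have hsplit : (A.offDiag.filter fun q => σ q.1 = σ q.2)
      = (A.filter fun u => σ u = true).offDiag ∪ (A.filter fun u => σ u = false).offDiag := by
    ext ⟨u, v⟩
    simp only [Finset.mem_filter, Finset.mem_offDiag, Finset.mem_union]
    cases hu : σ u <;> cases hv : σ v <;> simp <;> tauto
  rw [hsplit]
  apply Finset.card_union_of_disjoint
  rw [Finset.disjoint_left]
  rintro ⟨u, v⟩ hq hq'
  have h1 := (Finset.mem_offDiag.mp hq).1
  have h2 := (Finset.mem_offDiag.mp hq').1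
  simp only [Finset.mem_filter] at h1 h2
  rw [h1.2] at h2
  exact Bool.noConfusion h2.2

lemma split_card (n : ℕ) (σh : Fin n → Bool) (P : Fin n → Prop) [DecidablePred P] :
    (univ.filter P).card
      = ((Af σh).filter P).card + ((univ.filter fun u => σh u = false).filter P).card := by
  set A := Af σh with hA
  set B := univ.filter fun u : Fin n => σh u = false with hB
  have hunion : A ∪ B = univ := by ext u; simp [hA, hB, Af]
  have hdisj : Disjoint A B := by
    rw [Finset.disjoint_left]; intro u hu hu'
    simp [hA, hB, Af] at hu hu'; rw [hu] at hu'; exact Bool.noConfusion hu'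
  rw [← hunion, Finset.filter_union,
    Finset.card_union_of_disjoint (Finset.disjoint_filter_filter hdisj)]

lemma per_sigma (n : ℕ) (σh σ : Fin n → Bool)
    (hbal : 2 * (Af σh).card = n) (ε : ℝ)
    (hm : 2 ≤ (Af σh).card) (hσ : σ ∈ Gf n σh ε) :
    ((Af σh).filter fun u => σ u = true).card
        + ((Af σh).filter fun u => σ u = false).card = (Af σh).card ∧
    |((((Af σh).filter fun u => σ u = true).card : ℝ))
        - (1 / 2 + ε) * ((Af σh).card : ℝ)| ≤ (n : ℝ) ^ ((3 : ℝ) / 4) / 2 ∧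
    (1 / 2 + ε : ℝ) ≤ 1 := by
  classical
  set A := Af σh with hA
  set B := univ.filter fun u : Fin n => σh u = false with hB
  set m := A.card with hmdef
  set k := (A.filter fun u => σ u = true).card with hk
  set j := (A.filter fun u => σ u = false).card with hj
  set l := (B.filter fun u => σ u = false).card with hl
  set k' := (B.filter fun u => σ u = true).card with hk'
  have f1 : k + j = m := by
    have := Finset.card_filter_add_card_filter_not
      (s := A) (p := fun u => σ u = true)
    simpa [hk, hj, Bool.not_eq_true] using this
  have f2 : k' + l = B.card := by
    have := Finset.card_filter_add_card_filter_not
      (s := B) (p := fun u => σ u = true)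
    simpa [hl, hk', Bool.not_eq_true] using this
  have f3 : m + B.card = n := by
    have := Finset.card_filter_add_card_filter_not
      (s := (univ : Finset (Fin n))) (p := fun u => σh u = true)
    simp only [Bool.not_eq_true, Finset.card_univ, Fintype.card_fin] at this; exact this
  have hBm : B.card = m := by omega
  have f4 : (univ.filter fun w => σ w = σh w).card = k + l := by
    rw [split_card n σh]
    congr 1
    · rw [hk]; congr 1
      apply Finset.filter_congr
      intro u hu
      simp only [hA, Af, Finset.mem_filter] at hu
      rw [hu.2]
    · rw [hl, hB]; congr 1
      apply Finset.filter_congr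
      intro u hu
      simp only [Finset.mem_filter] at hu
      rw [hu.2]
  have f5 : (univ.filter fun w => σ w = true).card = k + k' := by
    rw [split_card n σh]
  have g4 : ({w | σ w = σh w}.ncard : ℕ) = k + l := by
    rw [Set.ncard_eq_toFinset_card', Set.toFinset_setOf]; exact f4
  have g5 : ({w | σ w = true}.ncard : ℕ) = k + k' := by
    rw [Set.ncard_eq_toFinset_card', Set.toFinset_setOf]; exact f5
  simp only [Gf, Finset.mem_filter, Finset.mem_univ, true_and] at hσ
  obtain ⟨hover, hE⟩ := hσ
  rw [g4] at hover
  rw [g5] at hE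
  have hn : (n : ℝ) = 2 * m := by exact_mod_cast (congrArg (Nat.cast : ℕ → ℝ) hbal).symm
  have hover' : (k : ℝ) + l = (1 / 2 + ε) * (2 * m) := by
    rw [← hn]; exact_mod_cast hover
  have hlk' : (k' : ℝ) + l = m := by exact_mod_cast f2.trans hBm
  have hkm : (k : ℝ) ≤ m := by
    exact_mod_cast Finset.card_le_card (Finset.filter_subset _ _)
  have hlm : (l : ℝ) ≤ m := by
    have : l ≤ B.card := Finset.card_le_card (Finset.filter_subset _ _)
    rw [hBm] at this; exact_mod_cast this
  have hm2 : (2 : ℝ) ≤ m := by exact_mod_cast hm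
  refine ⟨f1, ?_, by nlinarith⟩
  have e : 2 * ((k : ℝ) - (1 / 2 + ε) * m) = ((k : ℝ) + (k' : ℝ)) - (n : ℝ) / 2 := by
    rw [hn]; linarith
  have habs : |2 * ((k : ℝ) - (1 / 2 + ε) * m)| < (n : ℝ) ^ ((3 : ℝ) / 4) := by
    rw [e]; exact_mod_cast hE
  rw [abs_mul, abs_two] at habs
  linarith [abs_nonneg ((k : ℝ) - (1 / 2 + ε) * m)]

/-! ### The master estimate -/

lemma master (n : ℕ) (σh : Fin n → Bool)
    (hbal : 2 * (Finset.univ.filter fun u => σh u = true).card = n)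
    (ε : ℝ) (hε : 0 < ε) (hne : (condEvent n σh ε).Nonempty) :
    |uniformCondProb {p : (Fin n → Bool) × Fin n × Fin n |
          p.1 p.2.1 = true ∧ p.1 p.2.2 = true} (condEvent n σh ε)
        - (1 / 2 + ε) ^ 2| ≤ (4 * (n : ℝ) ^ ((3 : ℝ) / 4) + 4) / n ∧
    |uniformCondProb {p : (Fin n → Bool) × Fin n × Fin n |
          p.1 p.2.1 = false ∧ p.1 p.2.2 = false} (condEvent n σh ε)
        - (1 / 2 - ε) ^ 2| ≤ (4 * (n : ℝ) ^ ((3 : ℝ) / 4) + 4) / n ∧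
    |uniformCondProb {p : (Fin n → Bool) × Fin n × Fin n |
          p.1 p.2.1 = p.1 p.2.2} (condEvent n σh ε)
        - (1 / 2 + 2 * ε ^ 2)| ≤ 2 * ((4 * (n : ℝ) ^ ((3 : ℝ) / 4) + 4) / n) := by
  classical
  have hbal' : 2 * (Af σh).card = n := hbal
  set A := Af σh with hA
  set m := A.card with hmdef
  set R := (n : ℝ) ^ ((3 : ℝ) / 4) with hRdef
  obtain ⟨⟨σ₀, u₀, v₀⟩, hp⟩ := hne
  obtain ⟨hne0, hu0, hv0, hov0, hE0⟩ := hp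
  have hm : 2 ≤ m := by
    apply Finset.one_lt_card.mpr
    exact ⟨u₀, by simp [hA, Af, hu0], v₀, by simp [hA, Af, hv0], hne0⟩
  have hGne : (Gf n σh ε).Nonempty :=
    ⟨σ₀, by simp only [Gf, Finset.mem_filter, Finset.mem_univ, true_and]; exact ⟨hov0, hE0⟩⟩
  have hm2 : (2 : ℝ) ≤ m := by exact_mod_cast hm
  have hn : (n : ℝ) = 2 * m := by exact_mod_cast (congrArg (Nat.cast : ℕ → ℝ) hbal').symm
  have hn0 : (0 : ℝ) < n := by rw [hn]; linarith
  set D := (m : ℝ) * ((m : ℝ) - 1) with hDdef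
  have hD : 0 < D := by rw [hDdef]; nlinarith
  have hR0 : 0 ≤ R := Real.rpow_nonneg (le_of_lt hn0) _
  set err := (4 * (R / 2) + 2) / (m : ℝ) with herrdef
  have herr_eq : err = (4 * R + 4) / n := by
    rw [herrdef, hn]
    rw [div_eq_div_iff (by linarith) (by linarith)]
    ring
  -- denominator
  have hS : ((condEvent n σh ε).ncard : ℝ) = ((Gf n σh ε).card : ℝ) * D := by
    rw [condEvent_eq, Set.ncard_coe_finset, Finset.card_product, Finset.offDiag_card,
      Nat.cast_mul, cast_offdiag]
  -- numerators
  have hT1 : (({p : (Fin n → Bool) × Fin n × Fin n |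
        p.1 p.2.1 = true ∧ p.1 p.2.2 = true} ∩ condEvent n σh ε).ncard : ℝ)
      = ∑ σ ∈ Gf n σh ε,
          (((A.filter fun u => σ u = true).card : ℝ)
            * (((A.filter fun u => σ u = true).card : ℝ) - 1)) := by
    have hset : {p : (Fin n → Bool) × Fin n × Fin n |
          p.1 p.2.1 = true ∧ p.1 p.2.2 = true} ∩ condEvent n σh ε
        = ↑(((Gf n σh ε) ×ˢ A.offDiag).filter
            fun p => p.1 p.2.1 = true ∧ p.1 p.2.2 = true) := by
      rw [condEvent_eq]
      ext p
      simp only [Set.mem_inter_iff, Set.mem_setOf_eq, Finset.mem_coe, Finset.mem_filter]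
      tauto
    rw [hset, Set.ncard_coe_finset, card_filter_product, Nat.cast_sum]
    apply Finset.sum_congr rfl
    intro σ _
    rw [offDiag_filter_pair A σ true, Finset.offDiag_card, cast_offdiag]
  have hT2 : (({p : (Fin n → Bool) × Fin n × Fin n |
        p.1 p.2.1 = false ∧ p.1 p.2.2 = false} ∩ condEvent n σh ε).ncard : ℝ)
      = ∑ σ ∈ Gf n σh ε,
          (((A.filter fun u => σ u = false).card : ℝ)
            * (((A.filter fun u => σ u = false).card : ℝ) - 1)) := by
    have hset : {p : (Fin n → Bool) × Fin n × Fin n |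
          p.1 p.2.1 = false ∧ p.1 p.2.2 = false} ∩ condEvent n σh ε
        = ↑(((Gf n σh ε) ×ˢ A.offDiag).filter
            fun p => p.1 p.2.1 = false ∧ p.1 p.2.2 = false) := by
      rw [condEvent_eq]
      ext p
      simp only [Set.mem_inter_iff, Set.mem_setOf_eq, Finset.mem_coe, Finset.mem_filter]
      tauto
    rw [hset, Set.ncard_coe_finset, card_filter_product, Nat.cast_sum]
    apply Finset.sum_congr rfl
    intro σ _
    rw [offDiag_filter_pair A σ false, Finset.offDiag_card, cast_offdiag]
  have hT3 : (({p : (Fin n → Bool) × Fin n × Fin n |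
        p.1 p.2.1 = p.1 p.2.2} ∩ condEvent n σh ε).ncard : ℝ)
      = ∑ σ ∈ Gf n σh ε,
          ((((A.filter fun u => σ u = true).card : ℝ)
            * (((A.filter fun u => σ u = true).card : ℝ) - 1))
          + (((A.filter fun u => σ u = false).card : ℝ)
            * (((A.filter fun u => σ u = false).card : ℝ) - 1))) := by
    have hset : {p : (Fin n → Bool) × Fin n × Fin n |
          p.1 p.2.1 = p.1 p.2.2} ∩ condEvent n σh ε
        = ↑(((Gf n σh ε) ×ˢ A.offDiag).filter
            fun p => p.1 p.2.1 = p.1 p.2.2) := by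
      rw [condEvent_eq]
      ext p
      simp only [Set.mem_inter_iff, Set.mem_setOf_eq, Finset.mem_coe, Finset.mem_filter]
      tauto
    rw [hset, Set.ncard_coe_finset, card_filter_product, Nat.cast_sum]
    apply Finset.sum_congr rfl
    intro σ _
    rw [show (A.offDiag.filter fun q => σ q.1 = σ q.2).card
        = (A.filter fun u => σ u = true).offDiag.card
          + (A.filter fun u => σ u = false).offDiag.card from offDiag_filter_eq A σ]
    rw [Nat.cast_add, Finset.offDiag_card, Finset.offDiag_card, cast_offdiag, cast_offdiag]
  -- per-σ bounds
  have hbd1 : ∀ σ ∈ Gf n σh ε,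
      |(((A.filter fun u => σ u = true).card : ℝ)
          * (((A.filter fun u => σ u = true).card : ℝ) - 1)) / D - (1 / 2 + ε) ^ 2| ≤ err := by
    intro σ hσ
    obtain ⟨hkj, hkc, ht1⟩ := per_sigma n σh σ hbal' ε hm hσ
    exact ratio_bound hm (Finset.card_le_card (Finset.filter_subset _ _))
      (by linarith) ht1 hkc
  have hbd2 : ∀ σ ∈ Gf n σh ε,
      |(((A.filter fun u => σ u = false).card : ℝ)
          * (((A.filter fun u => σ u = false).card : ℝ) - 1)) / D - (1 / 2 - ε) ^ 2| ≤ err := by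
    intro σ hσ
    obtain ⟨hkj, hkc, ht1⟩ := per_sigma n σh σ hbal' ε hm hσ
    have hkjr : ((A.filter fun u => σ u = true).card : ℝ)
        + ((A.filter fun u => σ u = false).card : ℝ) = m := by exact_mod_cast hkj
    have hjc : |(((A.filter fun u => σ u = false).card : ℝ)) - (1 / 2 - ε) * (m : ℝ)|
        ≤ (n : ℝ) ^ ((3 : ℝ) / 4) / 2 := by
      have e : (((A.filter fun u => σ u = false).card : ℝ)) - (1 / 2 - ε) * (m : ℝ)
          = -((((A.filter fun u => σ u = true).card : ℝ)) - (1 / 2 + ε) * (m : ℝ)) := by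
        linarith
      rw [e, abs_neg]
      exact hkc
    exact ratio_bound hm (Finset.card_le_card (Finset.filter_subset _ _))
      (by linarith) (by linarith) hjc
  have hbd3 : ∀ σ ∈ Gf n σh ε,
      |((((A.filter fun u => σ u = true).card : ℝ)
          * (((A.filter fun u => σ u = true).card : ℝ) - 1))
        + (((A.filter fun u => σ u = false).card : ℝ)
          * (((A.filter fun u => σ u = false).card : ℝ) - 1))) / D
        - (1 / 2 + 2 * ε ^ 2)| ≤ 2 * err := by
    intro σ hσ
    have h1 := hbd1 σ hσ
    have h2 := hbd2 σ hσ
    have e : ((((A.filter fun u => σ u = true).card : ℝ)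
          * (((A.filter fun u => σ u = true).card : ℝ) - 1))
        + (((A.filter fun u => σ u = false).card : ℝ)
          * (((A.filter fun u => σ u = false).card : ℝ) - 1))) / D
        - (1 / 2 + 2 * ε ^ 2)
        = ((((A.filter fun u => σ u = true).card : ℝ)
            * (((A.filter fun u => σ u = true).card : ℝ) - 1)) / D - (1 / 2 + ε) ^ 2)
          + ((((A.filter fun u => σ u = false).card : ℝ)
            * (((A.filter fun u => σ u = false).card : ℝ) - 1)) / D - (1 / 2 - ε) ^ 2) := by
      rw [add_div]; ring
    rw [e]
    calc |_ + _| ≤ _ := abs_add_le _ _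
      _ ≤ err + err := add_le_add h1 h2
      _ = 2 * err := by ring
  refine ⟨?_, ?_, ?_⟩
  · rw [uniformCondProb, hT1, hS, ← herr_eq]
    exact avg_bound hGne hD _ _ err hbd1
  · rw [uniformCondProb, hT2, hS, ← herr_eq]
    exact avg_bound hGne hD _ _ err hbd2
  · rw [uniformCondProb, hT3, hS]
    have := avg_bound hGne hD _ (1 / 2 + 2 * ε ^ 2) (2 * err) hbd3
    rw [herr_eq] at this
    exact this


lemma tail (tol : ℝ) (htol : 0 < tol) :
    ∃ N : ℕ, ∀ n : ℕ, N ≤ n →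
      2 * ((4 * (n : ℝ) ^ ((3 : ℝ) / 4) + 4) / n) ≤ tol := by
  set B := max 1 (16 / tol) with hBdef
  refine ⟨⌈B ^ (4 : ℕ)⌉₊ + 1, fun n hn => ?_⟩
  have hB1 : (1 : ℝ) ≤ B := le_max_left _ _
  have hB0 : (0 : ℝ) < B := by linarith
  have hnB : (B ^ (4 : ℕ) : ℝ) ≤ n := by
    calc (B ^ (4 : ℕ) : ℝ) ≤ ⌈B ^ (4 : ℕ)⌉₊ := Nat.le_ceil _
      _ ≤ n := by exact_mod_cast Nat.le_of_succ_le hn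
  have hB4 : (1 : ℝ) ≤ B ^ (4 : ℕ) := one_le_pow₀ hB1
  have hn1 : (1 : ℝ) ≤ n := le_trans hB4 hnB
  have hn0 : (0 : ℝ) < n := by linarith
  have h14 : B ≤ (n : ℝ) ^ ((1 : ℝ) / 4) := by
    have h := Real.rpow_le_rpow (by positivity) hnB (by norm_num : (0 : ℝ) ≤ 1 / 4)
    rwa [← Real.rpow_natCast B 4, ← Real.rpow_mul hB0.le,
      show ((4 : ℕ) : ℝ) * (1 / 4) = 1 by norm_num, Real.rpow_one] at h
  have hsplit : (n : ℝ) = (n : ℝ) ^ ((1 : ℝ) / 4) * (n : ℝ) ^ ((3 : ℝ) / 4) := by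
    rw [← Real.rpow_add hn0]
    norm_num
  have h34 : (1 : ℝ) ≤ (n : ℝ) ^ ((3 : ℝ) / 4) := Real.one_le_rpow hn1 (by norm_num)
  have hTB : 16 ≤ tol * B := by
    calc (16 : ℝ) = tol * (16 / tol) := by field_simp
      _ ≤ tol * B := mul_le_mul_of_nonneg_left (le_max_right _ _) htol.le
  have key : 8 * (n : ℝ) ^ ((3 : ℝ) / 4) + 8 ≤ tol * n := by
    have h1 : tol * n = (tol * (n : ℝ) ^ ((1 : ℝ) / 4)) * (n : ℝ) ^ ((3 : ℝ) / 4) := by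
      rw [mul_assoc, ← hsplit]
    have h2 : 16 ≤ tol * (n : ℝ) ^ ((1 : ℝ) / 4) :=
      le_trans hTB (mul_le_mul_of_nonneg_left h14 htol.le)
    have h3 : 16 * (n : ℝ) ^ ((3 : ℝ) / 4) ≤ tol * n := by
      rw [h1]
      exact mul_le_mul_of_nonneg_right h2 (by linarith)
    nlinarith
  have e : 2 * ((4 * (n : ℝ) ^ ((3 : ℝ) / 4) + 4) / n)
      = (8 * (n : ℝ) ^ ((3 : ℝ) / 4) + 8) / n := by ring
  rw [e, div_le_iff₀ hn0]
  linarith [key]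

/-- **Pairwise agreement probabilities under a balanced, positively correlated labelling.**
Let `σ` be i.i.d. uniform spins, `σh` a balanced labelling (`|{u : σh_u = +}| = n/2`),
`f(n) = (1/n)∑ 1{σ_u = σh_u}`, `E` the event `|n₊ - n/2| < n^{3/4}`, and let `u ≠ v` be
uniformly chosen.  Fix `δ > 0`.  Uniformly over `ε ≥ δ/2` (as `n → ∞`):
`P(σ_u = σ_v = + | σh_u = σh_v = +, f(n) = 1/2+ε, E) → (1/2+ε)²`,
`P(σ_u = σ_v = - | ·) → (1/2-ε)²`, hence `P(σ_u = σ_v | ·) → 1/2 + 2ε²`; in particular there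
is `N = N(δ)` such that for all `n ≥ N` and all `ε ≥ δ/2`,
`P(σ_u = σ_v | ·) ≥ 1/2 + ε²`. -/
theorem stmt18 (δ : ℝ) (hδ : 0 < δ) :
    (∀ tol : ℝ, 0 < tol → ∃ N : ℕ, ∀ n : ℕ, N ≤ n →
      ∀ σh : Fin n → Bool, 2 * (Finset.univ.filter fun u => σh u = true).card = n →
      ∀ ε : ℝ, δ / 2 ≤ ε → (condEvent n σh ε).Nonempty →
        |uniformCondProb {p : (Fin n → Bool) × Fin n × Fin n |
              p.1 p.2.1 = true ∧ p.1 p.2.2 = true} (condEvent n σh ε)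
            - (1 / 2 + ε) ^ 2| ≤ tol ∧
        |uniformCondProb {p : (Fin n → Bool) × Fin n × Fin n |
              p.1 p.2.1 = false ∧ p.1 p.2.2 = false} (condEvent n σh ε)
            - (1 / 2 - ε) ^ 2| ≤ tol ∧
        |uniformCondProb {p : (Fin n → Bool) × Fin n × Fin n |
              p.1 p.2.1 = p.1 p.2.2} (condEvent n σh ε)
            - (1 / 2 + 2 * ε ^ 2)| ≤ tol) ∧
    (∃ N : ℕ, ∀ n : ℕ, N ≤ n →
      ∀ σh : Fin n → Bool, 2 * (Finset.univ.filter fun u => σh u = true).card = n →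
      ∀ ε : ℝ, δ / 2 ≤ ε → (condEvent n σh ε).Nonempty →
        1 / 2 + ε ^ 2 ≤ uniformCondProb {p : (Fin n → Bool) × Fin n × Fin n |
            p.1 p.2.1 = p.1 p.2.2} (condEvent n σh ε)) := by
  constructor
  · intro tol htol
    obtain ⟨N, hN⟩ := tail tol htol
    refine ⟨N, fun n hn σh hbal ε hε hne => ?_⟩
    have hε0 : 0 < ε := lt_of_lt_of_le (by linarith) hε
    obtain ⟨b1, b2, b3⟩ := master n σh hbal ε hε0 hne
    have hb := hN n hn
    have hnonneg : (0 : ℝ) ≤ (4 * (n : ℝ) ^ ((3 : ℝ) / 4) + 4) / n := by positivity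
    exact ⟨b1.trans (by linarith), b2.trans (by linarith), b3.trans hb⟩
  · obtain ⟨N, hN⟩ := tail (δ ^ 2 / 4) (by positivity)
    refine ⟨N, fun n hn σh hbal ε hε hne => ?_⟩
    have hε0 : 0 < ε := lt_of_lt_of_le (by linarith) hε
    have b3 := (master n σh hbal ε hε0 hne).2.2
    have hb := hN n hn
    have hεδ : δ ^ 2 / 4 ≤ ε ^ 2 := by nlinarith
    have habs := abs_le.mp (b3.trans (hb.trans hεδ))
    linarith [habs.1]

end
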